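/- Let μ(t) be a family of probability measures on the unit circle with moments μ_k(t) = ∫ ζ^{-k} dμ(ζ,t), and suppose dμ(ζ,t) = φ(ζ,t) dμ(ζ,0) where φ(ζ,t) = exp(t(ζ+ζ^{-1}))/f(t) and f(t) = ∫ exp(t(ζ+ζ^{-1})) dμ(ζ,0). Then μ_k'(t) = μ_{k-1}(t) + μ_{k+1}(t) - g(t)·μ_k(t) for all k ∈ ℤ, where g(t) = μ_1(t) + μ_{-1}(t). -/

import Mathlib

open Complex MeasureTheory

theorem stmt7 (μ0 : Measure ℂ) [IsProbabilityMeasure μ0]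
    (hcirc : ∀ᵐ z ∂μ0, ‖z‖ = 1)
    (m : ℤ → ℝ → ℂ)
    (hm : ∀ k t, m k t =
      (∫ z, Complex.exp ((t : ℂ) * (z + (starRingEnd ℂ) z)) ∂μ0)⁻¹ *
        ∫ z, z ^ (-k) * Complex.exp ((t : ℂ) * (z + (starRingEnd ℂ) z)) ∂μ0)
    (k : ℤ) (t : ℝ) :
    HasDerivAt (m k) (m (k - 1) t + m (k + 1) t - (m 1 t + m (-1) t) * m k t) t := by
  set E : ℝ → ℂ → ℂ := fun s z => Complex.exp ((s : ℂ) * (z + (starRingEnd ℂ) z)) with hE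
  set G : ℤ → ℝ → ℂ := fun j s => ∫ z, z ^ j * E s z ∂μ0 with hG
  -- measurability
  have hmeas : ∀ (j : ℤ) (s : ℝ), Measurable (fun z : ℂ => z ^ j * E s z) := by
    intro j s
    have h1 : Measurable (fun z : ℂ => z ^ j) := by
      rcases j with n | n
      · simpa using (measurable_id.pow_const n)
      · simp only [zpow_negSucc]
        exact ((measurable_id.pow_const (n+1)) : Measurable fun z : ℂ => z ^ (n+1)).inv
    exact h1.mul <| Complex.measurable_exp.comp <| measurable_const.mul
      (measurable_id.add (Complex.continuous_conj.measurable))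
  -- a.e. norm bound
  have hnorm : ∀ (j : ℤ) (s : ℝ), ∀ z : ℂ, ‖z‖ = 1 →
      ‖z ^ j * E s z‖ ≤ Real.exp (2 * |s|) := by
    intro j s z hz
    have hz0 : z ≠ 0 := by intro h; simp [h] at hz
    rw [norm_mul, norm_zpow, hz, one_zpow, one_mul, hE]
    rw [Complex.norm_exp]
    apply Real.exp_le_exp.2
    have : ((s : ℂ) * (z + (starRingEnd ℂ) z)).re = s * (2 * z.re) := by
      rw [Complex.re_ofReal_mul, Complex.add_re, Complex.conj_re]; ring
    rw [this]
    have hre : |z.re| ≤ 1 := by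
      calc |z.re| ≤ ‖z‖ := Complex.abs_re_le_norm z
      _ = 1 := hz
    calc s * (2 * z.re) ≤ |s * (2 * z.re)| := le_abs_self _
      _ = |s| * (2 * |z.re|) := by rw [abs_mul, abs_mul, _root_.abs_two]
      _ ≤ |s| * (2 * 1) := by nlinarith [abs_nonneg s]
      _ = 2 * |s| := by ring
  -- integrability
  have hint : ∀ (j : ℤ) (s : ℝ), Integrable (fun z : ℂ => z ^ j * E s z) μ0 := by
    intro j s
    refine Integrable.mono' (integrable_const (Real.exp (2 * |s|)))
      (hmeas j s).aestronglyMeasurable ?_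
    filter_upwards [hcirc] with z hz using hnorm j s z hz
  have hmeas' : ∀ (j : ℤ) (s : ℝ),
      Measurable (fun z : ℂ => z ^ j * ((z + (starRingEnd ℂ) z) * E s z)) := by
    intro j s
    have h1 : Measurable (fun z : ℂ => z ^ j) := by
      rcases j with n | n
      · simpa using (measurable_id.pow_const n)
      · simp only [zpow_negSucc]
        exact ((measurable_id.pow_const (n+1)) : Measurable fun z : ℂ => z ^ (n+1)).inv
    exact h1.mul <| ((measurable_id.add (Complex.continuous_conj.measurable)).mul
      (Complex.measurable_exp.comp <| measurable_const.mul
        (measurable_id.add (Complex.continuous_conj.measurable))))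
  -- derivative under the integral
  have hder : ∀ (j : ℤ), HasDerivAt (G j)
      (∫ z, z ^ j * ((z + (starRingEnd ℂ) z) * E t z) ∂μ0) t := by
    intro j
    have := hasDerivAt_integral_of_dominated_loc_of_deriv_le (μ := μ0)
      (F := fun (s : ℝ) (z : ℂ) => z ^ j * E s z)
      (F' := fun (s : ℝ) (z : ℂ) => z ^ j * ((z + (starRingEnd ℂ) z) * E s z))
      (x₀ := t) (s := Metric.ball t 1) (bound := fun _ => 2 * Real.exp (2 * (|t| + 1)))
      (Metric.ball_mem_nhds t one_pos)
      (Filter.Eventually.of_forall fun s => (hmeas j s).aestronglyMeasurable)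
      (hint j t)
      ?_ ?_ (integrable_const _) ?_
    · exact this.2
    · exact (hmeas' j t).aestronglyMeasurable
    · filter_upwards [hcirc] with z hz
      intro s hs
      have hz0 : z ≠ 0 := by intro h; simp [h] at hz
      have hs' : |s| ≤ |t| + 1 := by
        have := Metric.mem_ball.1 hs
        rw [Real.dist_eq] at this
        have := abs_sub_abs_le_abs_sub s t
        linarith [(Metric.mem_ball.1 hs)]
      calc ‖z ^ j * ((z + (starRingEnd ℂ) z) * E s z)‖
          = ‖z + (starRingEnd ℂ) z‖ * ‖z ^ j * E s z‖ := by
            rw [norm_mul, norm_mul, norm_mul]; ring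
        _ ≤ 2 * Real.exp (2 * |s|) := by
            apply mul_le_mul
            · calc ‖z + (starRingEnd ℂ) z‖ ≤ ‖z‖ + ‖(starRingEnd ℂ) z‖ := norm_add_le _ _
                _ = 2 := by rw [RCLike.norm_conj, hz]; norm_num
            · exact hnorm j s z hz
            · positivity
            · norm_num
        _ ≤ 2 * Real.exp (2 * (|t| + 1)) := by
            gcongr
    · filter_upwards with z
      intro s _
      have h1 : HasDerivAt (fun s : ℝ => E s z)
          ((z + (starRingEnd ℂ) z) * E s z) s := by
        have h2 : HasDerivAt (fun w : ℂ => Complex.exp (w * (z + (starRingEnd ℂ) z)))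
            (Complex.exp ((s : ℂ) * (z + (starRingEnd ℂ) z)) * (z + (starRingEnd ℂ) z))
            (s : ℂ) := by
          simpa using ((hasDerivAt_id ((s : ℝ) : ℂ)).mul_const (z + (starRingEnd ℂ) z)).cexp
        have := h2.comp_ofReal
        simpa [hE, mul_comm] using this
      simpa [mul_comm, mul_assoc, mul_left_comm] using h1.const_mul (z ^ j)
  -- split the derivative integrand
  have hsplit : ∀ j : ℤ, (∫ z, z ^ j * ((z + (starRingEnd ℂ) z) * E t z) ∂μ0)
      = G (j+1) t + G (j-1) t := by
    intro j
    have hae : ∀ᵐ z ∂μ0, z ^ j * ((z + (starRingEnd ℂ) z) * E t z)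
        = z ^ (j+1) * E t z + z ^ (j-1) * E t z := by
      filter_upwards [hcirc] with z hz
      have hz0 : z ≠ 0 := by intro h; simp [h] at hz
      have habs : ‖z‖ = 1 := hz
      have hconj : (starRingEnd ℂ) z = z⁻¹ := by
        have h1 : z * (starRingEnd ℂ) z = 1 := by
          rw [Complex.mul_conj]
          rw [Complex.normSq_eq_norm_sq, habs]
          norm_num
        exact (inv_eq_of_mul_eq_one_right h1).symm
      have e1 : z ^ j * z = z ^ (j+1) := (zpow_add_one₀ hz0 j).symm
      have e2 : z ^ j * z⁻¹ = z ^ (j-1) := by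
        rw [zpow_sub_one₀ hz0]
      calc z ^ j * ((z + (starRingEnd ℂ) z) * E t z)
          = (z ^ j * z) * E t z + (z ^ j * z⁻¹) * E t z := by rw [hconj]; ring
        _ = z ^ (j+1) * E t z + z ^ (j-1) * E t z := by rw [e1, e2]
    rw [integral_congr_ae hae, integral_add (hint (j+1) t) (hint (j-1) t)]
  have hderG : ∀ j : ℤ, HasDerivAt (G j) (G (j+1) t + G (j-1) t) t :=
    fun j => (hsplit j) ▸ hder j
  -- positivity of the normalizing integral
  have hFpos : ∀ s : ℝ, 0 < (G 0 s).re := by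
    intro s
    have hre : (G 0 s).re = ∫ z, (z ^ (0:ℤ) * E s z).re ∂μ0 := (integral_re (hint 0 s)).symm
    have hle : ∀ᵐ z ∂μ0, Real.exp (-(2 * |s|)) ≤ (z ^ (0:ℤ) * E s z).re := by
      filter_upwards [hcirc] with z hz
      have hre2 : |z.re| ≤ 1 := by
        calc |z.re| ≤ ‖z‖ := Complex.abs_re_le_norm z
        _ = 1 := hz
      simp only [zpow_zero, one_mul, hE]
      rw [Complex.add_conj]
      have : (s : ℂ) * ((2 * z.re : ℝ) : ℂ) = ((s * (2 * z.re) : ℝ) : ℂ) := by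
        push_cast; ring
      rw [this, Complex.exp_ofReal_re]
      apply Real.exp_le_exp.2
      have := neg_abs_le (s * (2 * z.re))
      have habs : |s * (2 * z.re)| ≤ 2 * |s| := by
        rw [abs_mul, abs_mul, _root_.abs_two]
        nlinarith [abs_nonneg s]
      linarith
    have hmono := integral_mono_ae (integrable_const (Real.exp (-(2 * |s|))))
      (hint 0 s).re hle
    rw [integral_const] at hmono
    simp only [probReal_univ, one_smul] at hmono
    rw [hre]
    calc (0:ℝ) < Real.exp (-(2 * |s|)) := Real.exp_pos _
      _ ≤ _ := hmono
  have hFne : ∀ s : ℝ, G 0 s ≠ 0 := by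
    intro s h
    have := hFpos s
    rw [h] at this
    simp at this
  -- rewrite m in terms of G
  have hmk : ∀ (j : ℤ) (s : ℝ), m j s = (G 0 s)⁻¹ * G (-j) s := by
    intro j s
    rw [hm]
    congr 2
    simp [hG, hE]
  have hmfun : m k = fun s => G (-k) s / G 0 s := by
    funext s
    rw [hmk k s, inv_mul_eq_div]
  rw [hmfun]
  have hd := (hderG (-k)).div (hderG 0) (hFne t)
  convert hd using 1
  case e'_4 => rfl
  case e'_8 => rfl
  rw [hmk (k-1), hmk (k+1), hmk 1, hmk (-1)]
  have e1 : -(k-1) = -k+1 := by ring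
  have e2 : -(k+1) = -k-1 := by ring
  have e3 : ((0:ℤ)+1) = 1 := by ring
  have e4 : ((0:ℤ)-1) = -1 := by ring
  have e5 : (-(-1):ℤ) = 1 := by ring
  rw [e1, e2, e5]
  rw [e3, e4]
  simp only []
  field_simp [hFne t]
  ring
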